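/- Define on R^{6N} (with coordinates Φ_i, Ψ_i ∈ R^N for i = 1,2,3) the Hamiltonian H^x = − Σ_{k=1}^3 α_k ⟨AΦ_k, Ψ_k⟩ − Σ_{1≤k<l≤3} ((α_k−α_l)/(γ_k−γ_l)) ⟨Φ_k,Ψ_l⟩⟨Φ_l,Ψ_k⟩, where A = diag(λ_1,…,λ_N). Then the Hamiltonian equations Φ_{i,x} = −∂H^x/∂Ψ_i, Ψ_{i,x} = ∂H^x/∂Φ_i are componentwise equivalent to the constrained spatial flow φ^(s)_x = U(ũ,λ_s)φ^(s), ψ^(s)_x = −U(ũ,λ_s)^T ψ^(s), s = 1,…,N, where U(u,λ) is the 3×3 matrix with diagonal entries α_i λ and off-diagonal entries u_{ij}, and ũ_{ij} = ((α_i−α_j)/(γ_i−γ_j)) ⟨Φ_i,Ψ_j⟩. -/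
import Mathlib
set_option maxHeartbeats 800000


open Matrix

section StmtSixAux

private lemma stmt6_sum_updR {N : ℕ} (P Q : Fin N → ℝ) (l : Fin N) (y : ℝ) :
    ∑ m, P m * Function.update Q l y m = (∑ m, P m * Q m) + P l * (y - Q l) := by
  have h : ∀ m, P m * Function.update Q l y m
      = P m * Q m + (if m = l then P l * (y - Q l) else 0) := by
    intro m
    rcases eq_or_ne m l with rfl | hm
    · simp; ring
    · simp [Function.update_of_ne hm, hm]
  simp only [h, Finset.sum_add_distrib, Finset.sum_ite_eq', Finset.mem_univ, if_true]

private lemma stmt6_sum_updR2 {N : ℕ} (lam P Q : Fin N → ℝ) (l : Fin N) (y : ℝ) :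
    ∑ m, lam m * P m * Function.update Q l y m
      = (∑ m, lam m * P m * Q m) + lam l * P l * (y - Q l) := by
  simpa [mul_assoc] using stmt6_sum_updR (fun m => lam m * P m) Q l y

private lemma stmt6_sum_updL {N : ℕ} (P Q : Fin N → ℝ) (l : Fin N) (y : ℝ) :
    ∑ m, Function.update P l y m * Q m = (∑ m, P m * Q m) + (y - P l) * Q l := by
  have := stmt6_sum_updR Q P l y
  have h : ∀ m, Function.update P l y m * Q m = Q m * Function.update P l y m :=
    fun m => mul_comm _ _
  have h2 : ∀ m, P m * Q m = Q m * P m := fun m => mul_comm _ _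
  simp only [h, h2, this]
  ring

private lemma stmt6_sum_updL2 {N : ℕ} (lam P Q : Fin N → ℝ) (l : Fin N) (y : ℝ) :
    ∑ m, lam m * Function.update P l y m * Q m
      = (∑ m, lam m * P m * Q m) + lam l * (y - P l) * Q l := by
  have h : ∀ m, lam m * Function.update P l y m * Q m
      = Function.update P l y m * (lam m * Q m) := fun m => by ring
  have h2 : ∀ m, lam m * P m * Q m = P m * (lam m * Q m) := fun m => by ring
  simp only [h, h2, stmt6_sum_updL P (fun m => lam m * Q m) l y]
  ring

private lemma stmt6_affine_deriv (f : ℝ → ℝ) (a t : ℝ) (h : ∀ y, f y = a * (y - t) + f t) :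
    deriv f t = a := by
  obtain ⟨c, h'⟩ : ∃ c, ∀ y, f y = a * (y - t) + c := ⟨f t, h⟩
  have hf : f = fun y => a * (y - t) + c := funext h'
  rw [hf]
  have := (((hasDerivAt_id t).sub_const t).const_mul a).add_const c
  simpa using this.deriv

end StmtSixAux

theorem stmt6 (N : ℕ) (α γ : Fin 3 → ℝ)
    (hα : ∀ i j, i ≠ j → α i ≠ α j) (hγ : ∀ i j, i ≠ j → γ i ≠ γ j)
    (lam : Fin N → ℝ) (hlam : ∀ s s', s ≠ s' → lam s ≠ lam s')
    (Hx : (Fin 3 → Fin N → ℝ) → (Fin 3 → Fin N → ℝ) → ℝ)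
    (hHx : Hx = fun P Q =>
      -(∑ k, α k * ∑ m, lam m * P k m * Q k m)
        - ∑ k, ∑ l, (if k < l then
            (α k - α l) / (γ k - γ l) * ((∑ m, P k m * Q l m) * (∑ m, P l m * Q k m))
          else 0))
    (U : (Fin 3 → Fin 3 → ℝ) → ℝ → Matrix (Fin 3) (Fin 3) ℝ)
    (hU : U = fun u lamv => Matrix.of fun i j => if i = j then α i * lamv else u i j)
    (Φ Ψ : ℝ → Fin 3 → Fin N → ℝ) :
    (∀ x (i : Fin 3) (l : Fin N),
        HasDerivAt (fun ξ => Φ ξ i l)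
          (-(deriv (fun y => Hx (Φ x) (Function.update (Ψ x) i (Function.update (Ψ x i) l y)))
              (Ψ x i l))) x
      ∧ HasDerivAt (fun ξ => Ψ ξ i l)
          (deriv (fun y => Hx (Function.update (Φ x) i (Function.update (Φ x i) l y)) (Ψ x))
              (Φ x i l)) x)
    ↔ (∀ x (s : Fin N) (i : Fin 3),
        HasDerivAt (fun ξ => Φ ξ i s)
          ((U (fun i j => (α i - α j) / (γ i - γ j) * ∑ m, Φ x i m * Ψ x j m) (lam s)
              *ᵥ fun j => Φ x j s) i) x
      ∧ HasDerivAt (fun ξ => Ψ ξ i s)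
          ((-(U (fun i j => (α i - α j) / (γ i - γ j) * ∑ m, Φ x i m * Ψ x j m) (lam s))ᵀ
              *ᵥ fun j => Ψ x j s) i) x) := by
  subst hHx
  subst hU
  have flip10 : (α 1 - α 0) / (γ 1 - γ 0) = (α 0 - α 1) / (γ 0 - γ 1) := by
    rw [← neg_div_neg_eq, neg_sub, neg_sub]
  have flip20 : (α 2 - α 0) / (γ 2 - γ 0) = (α 0 - α 2) / (γ 0 - γ 2) := by
    rw [← neg_div_neg_eq, neg_sub, neg_sub]
  have flip21 : (α 2 - α 1) / (γ 2 - γ 1) = (α 1 - α 2) / (γ 1 - γ 2) := by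
    rw [← neg_div_neg_eq, neg_sub, neg_sub]
  have keyΦ : ∀ (x : ℝ) (i : Fin 3) (l : Fin N),
      -(deriv (fun y =>
          -(∑ k, α k * ∑ m, lam m * Φ x k m
              * (Function.update (Ψ x) i (Function.update (Ψ x i) l y)) k m)
            - ∑ k, ∑ l', (if k < l' then
                (α k - α l') / (γ k - γ l')
                  * ((∑ m, Φ x k m
                        * (Function.update (Ψ x) i (Function.update (Ψ x i) l y)) l' m)
                    * (∑ m, Φ x l' m
                        * (Function.update (Ψ x) i (Function.update (Ψ x i) l y)) k m))
              else 0)) (Ψ x i l))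
        = (((Matrix.of fun i j => if i = j then α i * lam l
              else (α i - α j) / (γ i - γ j) * ∑ m, Φ x i m * Ψ x j m)
            *ᵥ fun j => Φ x j l) i) := by
    intro x i l
    rw [neg_eq_iff_eq_neg]
    apply stmt6_affine_deriv
    intro y
    rcases show i = 0 ∨ i = 1 ∨ i = 2 from by fin_cases i <;> simp with rfl | rfl | rfl <;>
    · simp only [Fin.isValue, Fin.sum_univ_three, Matrix.mulVec, dotProduct, Matrix.of_apply,
        Function.update_self, Function.update_eq_self,
        Function.update_of_ne (show (1:Fin 3) ≠ 0 from by decide),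
        Function.update_of_ne (show (2:Fin 3) ≠ 0 from by decide),
        Function.update_of_ne (show (0:Fin 3) ≠ 1 from by decide),
        Function.update_of_ne (show (2:Fin 3) ≠ 1 from by decide),
        Function.update_of_ne (show (0:Fin 3) ≠ 2 from by decide),
        Function.update_of_ne (show (1:Fin 3) ≠ 2 from by decide),
        show ((0:Fin 3) < 1) from by decide,
        show ((0:Fin 3) < 2) from by decide, show ((1:Fin 3) < 2) from by decide,
        show ¬((1:Fin 3) < 0) from by decide, show ¬((2:Fin 3) < 0) from by decide,
        show ¬((2:Fin 3) < 1) from by decide, show ¬((0:Fin 3) < 0) from by decide,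
        show ¬((1:Fin 3) < 1) from by decide, show ¬((2:Fin 3) < 2) from by decide,
        show ((1:Fin 3) ≠ 0) from by decide, show ((2:Fin 3) ≠ 0) from by decide,
        show ((0:Fin 3) ≠ 1) from by decide, show ((2:Fin 3) ≠ 1) from by decide,
        show ((0:Fin 3) ≠ 2) from by decide, show ((1:Fin 3) ≠ 2) from by decide,
        if_true, if_false, stmt6_sum_updR, stmt6_sum_updR2, flip10, flip20, flip21]
      ring
  have keyΨ : ∀ (x : ℝ) (i : Fin 3) (l : Fin N),
      deriv (fun y =>
          -(∑ k, α k * ∑ m, lam m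
              * (Function.update (Φ x) i (Function.update (Φ x i) l y)) k m * Ψ x k m)
            - ∑ k, ∑ l', (if k < l' then
                (α k - α l') / (γ k - γ l')
                  * ((∑ m, (Function.update (Φ x) i (Function.update (Φ x i) l y)) k m
                        * Ψ x l' m)
                    * (∑ m, (Function.update (Φ x) i (Function.update (Φ x i) l y)) l' m
                        * Ψ x k m))
              else 0)) (Φ x i l)
        = ((-(Matrix.of fun i j => if i = j then α i * lam l
              else (α i - α j) / (γ i - γ j) * ∑ m, Φ x i m * Ψ x j m)ᵀ
            *ᵥ fun j => Ψ x j l) i) := by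
    intro x i l
    apply stmt6_affine_deriv
    intro y
    rcases show i = 0 ∨ i = 1 ∨ i = 2 from by fin_cases i <;> simp with rfl | rfl | rfl <;>
    · simp only [Fin.isValue, Fin.sum_univ_three, Matrix.mulVec, dotProduct, Matrix.of_apply,
        Matrix.transpose_apply, Matrix.neg_apply,
        Function.update_self, Function.update_eq_self,
        Function.update_of_ne (show (1:Fin 3) ≠ 0 from by decide),
        Function.update_of_ne (show (2:Fin 3) ≠ 0 from by decide),
        Function.update_of_ne (show (0:Fin 3) ≠ 1 from by decide),
        Function.update_of_ne (show (2:Fin 3) ≠ 1 from by decide),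
        Function.update_of_ne (show (0:Fin 3) ≠ 2 from by decide),
        Function.update_of_ne (show (1:Fin 3) ≠ 2 from by decide),
        show ((0:Fin 3) < 1) from by decide,
        show ((0:Fin 3) < 2) from by decide, show ((1:Fin 3) < 2) from by decide,
        show ¬((1:Fin 3) < 0) from by decide, show ¬((2:Fin 3) < 0) from by decide,
        show ¬((2:Fin 3) < 1) from by decide, show ¬((0:Fin 3) < 0) from by decide,
        show ¬((1:Fin 3) < 1) from by decide, show ¬((2:Fin 3) < 2) from by decide,
        show ((1:Fin 3) ≠ 0) from by decide, show ((2:Fin 3) ≠ 0) from by decide,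
        show ((0:Fin 3) ≠ 1) from by decide, show ((2:Fin 3) ≠ 1) from by decide,
        show ((0:Fin 3) ≠ 2) from by decide, show ((1:Fin 3) ≠ 2) from by decide,
        if_true, if_false, stmt6_sum_updL, stmt6_sum_updL2, flip10, flip20, flip21]
      ring
  constructor
  · intro h x s i
    obtain ⟨h1, h2⟩ := h x i s
    refine ⟨?_, ?_⟩
    · rw [← keyΦ x i s]; exact h1
    · rw [← keyΨ x i s]; exact h2
  · intro h x i l
    obtain ⟨h1, h2⟩ := h x l i
    refine ⟨?_, ?_⟩
    · rw [keyΦ x i l]; exact h1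
    · rw [keyΨ x i l]; exact h2
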